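/- Let Σ be a finite alphabet, let p ≥ 2 be an integer, let W be a set of finite partial words over Σ, let f : ℕ_{>0} → ℕ_{>0}, let G(V,A) = R_p(Σ) be the Rauzy graph of length 2p−3 of the square-free words over Σ, and let X ⊆ Ψ(V) be a nonempty set such that for all v ∈ X and all w ∈ W, p_{|w|,w,Ψ(G)[X]}(v) ≥ f(|w|). Then there exists a language L of finite words over Σ such that: the empty word belongs to L; every u ∈ L avoids squares of period less than p; and for every u ∈ L and every w ∈ W there are at least f(|w|) different words v ∈ Σ^{|w|} compatible with w such that uv ∈ L. -/
import Mathlib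


/-- A finite word is square-free: no factor is of the form `v ++ v` with `v` nonempty. -/
def SqFree {α : Type*} (u : List α) : Prop :=
  ∀ v : List α, v ≠ [] → ¬ ((v ++ v) <:+: u)

/-- `u` avoids squares of period less than `p`. -/
def AvoidsSquaresLt {α : Type*} (p : ℕ) (u : List α) : Prop :=
  ∀ v : List α, v ≠ [] → v.length < p → ¬ ((v ++ v) <:+: u)

/-- `v` is compatible with the finite partial word `μ` (where `none` is the wildcard `⋄`). -/
def CompatFin {α : Type*} (v : List α) (μ : List (Option α)) : Prop :=
  v.length ≤ μ.length ∧
    ∀ i : ℕ, i < v.length → ∀ a : α, μ[i]? = some (some a) → v[i]? = some a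

/-- The arcs of the induced subgraph `G[X]`. -/
def inducedArcs {α : Type*} (A : Set (List α × List α × α)) (X : Set (List α)) :
    Set (List α × List α × α) :=
  {t | t ∈ A ∧ t.1 ∈ X ∧ t.2.1 ∈ X}

/-- The vertices of `R_p(α)`, the Rauzy graph of length `2p-3` of square-free words. -/
def rauzyVertices (α : Type*) (p : ℕ) : Set (List α) :=
  {u | SqFree u ∧ u.length = 2 * p - 3}

/-- The arcs of `R_p(α)`: `(au, ub, b)` for square-free words `aub` of length `2p-2`. -/
def rauzyArcs (α : Type*) (p : ℕ) : Set (List α × List α × α) :=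
  {t | ∃ (a b : α) (u : List α), SqFree (a :: (u ++ [b])) ∧ u.length = 2 * p - 4 ∧
    t = (a :: u, u ++ [b], b)}

/-- The walk counts `p_{i,w,G}(v)`: number of walks of length `i` starting from `v`
compatible with the last `i` letters of the partial word `w`. -/
noncomputable def walkCount {α : Type*} (A : Set (List α × List α × α))
    (w : List (Option α)) : ℕ → List α → ℕ
  | 0, _ => 1
  | i + 1, v =>
    ∑ᶠ (u : List α), ∑ᶠ (a : α),
      ∑ᶠ (_ : (v, u, a) ∈ A ∧ ∀ b : α, w[w.length - (i + 1)]? = some (some b) → a = b),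
        walkCount A w i u

/-- The defining property of `Ψ`: for every `i` with `⌈|s|/2⌉ + 1 ≤ i ≤ p - 1` there is
`k ∈ {0, …, |s| - i - 1}` with `s_{|s|-k} ≠ s_{|s|-k-i}` (positions 1-indexed). -/
def PsiProp {α : Type*} (p : ℕ) (s : List α) : Prop :=
  ∀ i : ℕ, (s.length + 1) / 2 + 1 ≤ i → i ≤ p - 1 →
    ∃ k : ℕ, k + i + 1 ≤ s.length ∧ s[s.length - k - 1]? ≠ s[s.length - k - i - 1]?

/-- `Ψ(w)`: the shortest suffix of `w` satisfying `PsiProp p`, i.e. the suffix obtained by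
dropping the largest possible number of initial letters. -/
noncomputable def psi {α : Type*} (p : ℕ) (w : List α) : List α :=
  w.drop (sSup {d : ℕ | PsiProp p (w.drop d)})

/-- The arc set of `Ψ(G)`: `{(Ψ(a), Ψ(b), c) : (a, b, c) ∈ A}`. -/
def psiArcs {α : Type*} (p : ℕ) (A : Set (List α × List α × α)) :
    Set (List α × List α × α) :=
  {t | ∃ s ∈ A, t = (psi p s.1, psi p s.2.1, s.2.2)}

section Aux
variable {α : Type*}

lemma SqFree.infix {u l : List α} (h : SqFree u) (hl : l <:+: u) : SqFree l :=
  fun v hv hvv => h v hv (hvv.trans hl)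

lemma infix_append_singleton {l x : List α} {c : α} (h : l <:+: x ++ [c]) :
    l <:+: x ∨ l <:+ x ++ [c] := by
  obtain ⟨a, b, hab⟩ := h
  rcases List.eq_nil_or_concat b with rfl | ⟨b', e, rfl⟩
  · right; exact ⟨a, by simpa using hab⟩
  · left
    have h2 : (a ++ l ++ b') ++ [e] = x ++ [c] := by
      simpa [List.concat_eq_append, List.append_assoc] using hab
    obtain ⟨h3, -⟩ := List.append_inj' h2 rfl
    exact ⟨a, b', by simpa [List.append_assoc] using h3⟩

lemma suffix_append_single {l₁ l₂ : List α} (h : l₁ <:+ l₂) (c : α) :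
    l₁ ++ [c] <:+ l₂ ++ [c] := by
  obtain ⟨z, rfl⟩ := h; exact ⟨z, (List.append_assoc _ _ _).symm⟩

lemma suffix_tail_of_lt {t r : List α} (h : t <:+ r) (hlt : t.length < r.length) :
    t <:+ r.tail := by
  obtain ⟨z, rfl⟩ := h
  match z with
  | [] => simp at hlt
  | a :: z' => exact ⟨z', by simp⟩

lemma psiProp_nil_false {p : ℕ} (hp : 2 ≤ p) : ¬ PsiProp p ([] : List α) := by
  intro h
  obtain ⟨k, hk, -⟩ := h 1 (by norm_num) (by omega)
  simp at hk

lemma bddAbove_psiSet {p : ℕ} (hp : 2 ≤ p) (s : List α) :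
    BddAbove {d : ℕ | PsiProp p (s.drop d)} := by
  refine ⟨s.length, fun d hd => ?_⟩
  by_contra hlt
  push_neg at hlt
  simp only [Set.mem_setOf_eq] at hd
  rw [List.drop_eq_nil_of_le (le_of_lt hlt)] at hd
  exact psiProp_nil_false hp hd

lemma psiProp_of_long {p : ℕ} {s : List α} (h : 2 * p - 3 ≤ s.length) : PsiProp p s := by
  intro i h1 h2
  exfalso
  omega

lemma psi_spec {p : ℕ} (hp : 2 ≤ p) {s : List α} (hs : 2 * p - 3 ≤ s.length) :
    PsiProp p (psi p s) ∧ psi p s <:+ s := by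
  constructor
  · have hne : {d : ℕ | PsiProp p (s.drop d)}.Nonempty :=
      ⟨0, by rw [Set.mem_setOf_eq, List.drop_zero]; exact psiProp_of_long hs⟩
    exact Nat.sSup_mem hne (bddAbove_psiSet hp s)
  · exact List.drop_suffix _ _

lemma psiProp_append {p : ℕ} {t : List α} (h : PsiProp p t) (c : α) :
    PsiProp p (t ++ [c]) := by
  intro i h1 h2
  rw [List.length_append, List.length_singleton] at h1
  obtain ⟨k, hk, hne⟩ := h i (by omega) h2
  have hi : 1 ≤ i := by omega
  refine ⟨k + 1, by simp only [List.length_append, List.length_singleton]; omega, ?_⟩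
  have e1 : (t ++ [c])[(t ++ [c]).length - (k + 1) - 1]? = t[t.length - k - 1]? := by
    rw [List.getElem?_append_left
      (show (t ++ [c]).length - (k + 1) - 1 < t.length by
        simp only [List.length_append, List.length_singleton]; omega)]
    congr 1
    simp only [List.length_append, List.length_singleton]; omega
  have e2 : (t ++ [c])[(t ++ [c]).length - (k + 1) - i - 1]? = t[t.length - k - i - 1]? := by
    rw [List.getElem?_append_left
      (show (t ++ [c]).length - (k + 1) - i - 1 < t.length by
        simp only [List.length_append, List.length_singleton]; omega)]
    congr 1
    simp only [List.length_append, List.length_singleton]; omega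
  rw [e1, e2]; exact hne

end Aux

section Core
variable {α : Type*}

lemma sqfree_extend_transfer {p : ℕ} (hp : 2 ≤ p) {s s' : List α}
    (hs' : SqFree s') (hl : s.length = 2 * p - 3) (hl' : s'.length = 2 * p - 3)
    (hpsi : psi p s = psi p s') {c : α} (hext : SqFree (s ++ [c])) :
    SqFree (s' ++ [c]) := by
  intro v hv hinf
  rcases infix_append_singleton hinf with hcase | hsuf
  · exact hs' v hv hcase
  · have hts' : psi p s' <:+ s' := (psi_spec hp hl'.ge).2
    have hts : psi p s' <:+ s := by rw [← hpsi]; exact (psi_spec hp hl.ge).2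
    have hvlen : 0 < v.length := List.length_pos_iff.mpr hv
    have hsuflen : v.length + v.length ≤ s'.length + 1 := by
      have := hsuf.length_le
      simpa using this
    by_cases hc : 2 * v.length ≤ (psi p s').length + 1
    · have h1 : v ++ v <:+ psi p s' ++ [c] :=
        List.suffix_of_suffix_length_le hsuf (suffix_append_single hts' c)
          (by simp only [List.length_append, List.length_singleton]; omega)
      have h2 : v ++ v <:+ s ++ [c] := h1.trans (suffix_append_single hts c)
      exact hext v hv h2.isInfix
    · have hPt : PsiProp p (psi p s') := (psi_spec hp hl'.ge).1
      obtain ⟨k, hk, hne⟩ := hPt v.length (by omega) (by omega)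
      have h2 : psi p s' ++ [c] <:+ v ++ v :=
        List.suffix_of_suffix_length_le (suffix_append_single hts' c) hsuf
          (by simp only [List.length_append, List.length_singleton]; omega)
      obtain ⟨z₃, hz₃⟩ := h2
      have hz₃l : z₃.length + (psi p s').length + 1 = 2 * v.length := by
        have := congrArg List.length hz₃
        simp only [List.length_append, List.length_singleton] at this
        omega
      have hper : ∀ q, q < v.length → (v ++ v)[q]? = (v ++ v)[q + v.length]? := by
        intro q hq
        rw [List.getElem?_append_left (by omega), List.getElem?_append_right (by omega)]
        congr 1; omega
      have e1 : (v ++ v)[v.length - k - 2]? = (psi p s')[(psi p s').length - k - v.length - 1]? := by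
        rw [← hz₃, List.getElem?_append_right (by omega),
          List.getElem?_append_left (by omega)]
        congr 1; omega
      have e2 : (v ++ v)[v.length - k - 2 + v.length]? =
          (psi p s')[(psi p s').length - k - 1]? := by
        rw [← hz₃, List.getElem?_append_right (by omega),
          List.getElem?_append_left (by omega)]
        congr 1; omega
      apply hne
      rw [← e2, ← e1]
      exact (hper (v.length - k - 2) (by omega)).symm

lemma psi_canon {p : ℕ} (hp : 2 ≤ p) {t r : List α} (c : α)
    (htr : t <:+ r) (hlt : t.length < r.length) (hPt : PsiProp p t) :
    psi p (r.tail ++ [c]) =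
      (t ++ [c]).drop (sSup {e : ℕ | PsiProp p ((t ++ [c]).drop e)}) := by
  have htail : t <:+ r.tail := suffix_tail_of_lt htr hlt
  have hsuf : t ++ [c] <:+ r.tail ++ [c] := suffix_append_single htail c
  have hylen : (r.tail ++ [c]).length = r.length := by
    simp only [List.length_append, List.length_tail, List.length_singleton]; omega
  obtain ⟨z₂, hz₂⟩ := hsuf
  have hz₂l : z₂.length = (r.tail ++ [c]).length - t.length - 1 := by
    have := congrArg List.length hz₂
    simp only [List.length_append, List.length_singleton] at this ⊢
    omega
  have hd₀drop : (r.tail ++ [c]).drop ((r.tail ++ [c]).length - t.length - 1) = t ++ [c] := by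
    rw [← hz₂l, ← hz₂, List.drop_left]
  set d₀ := (r.tail ++ [c]).length - t.length - 1 with hd₀def
  have hPtc : PsiProp p (t ++ [c]) := psiProp_append hPt c
  have hshift : ∀ e : ℕ, (r.tail ++ [c]).drop (d₀ + e) = (t ++ [c]).drop e := by
    intro e
    rw [← hd₀drop, List.drop_drop]
  have hDbdd := bddAbove_psiSet hp (r.tail ++ [c])
  have hEbdd := bddAbove_psiSet hp (t ++ [c])
  have hDnon : {d : ℕ | PsiProp p ((r.tail ++ [c]).drop d)}.Nonempty :=
    ⟨d₀, by rw [Set.mem_setOf_eq, hd₀drop]; exact hPtc⟩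
  have hEnon : {e : ℕ | PsiProp p ((t ++ [c]).drop e)}.Nonempty :=
    ⟨0, by rw [Set.mem_setOf_eq, List.drop_zero]; exact hPtc⟩
  have hmem := Nat.sSup_mem hDnon hDbdd
  have hEmem := Nat.sSup_mem hEnon hEbdd
  have hm_ge : d₀ ≤ sSup {d : ℕ | PsiProp p ((r.tail ++ [c]).drop d)} :=
    le_csSup hDbdd (by rw [Set.mem_setOf_eq, hd₀drop]; exact hPtc)
  have hkey : sSup {d : ℕ | PsiProp p ((r.tail ++ [c]).drop d)} =
      d₀ + sSup {e : ℕ | PsiProp p ((t ++ [c]).drop e)} := by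
    apply le_antisymm
    · have h1 : PsiProp p ((t ++ [c]).drop
          (sSup {d : ℕ | PsiProp p ((r.tail ++ [c]).drop d)} - d₀)) := by
        rw [← hshift]
        rw [show d₀ + (sSup {d : ℕ | PsiProp p ((r.tail ++ [c]).drop d)} - d₀)
            = sSup {d : ℕ | PsiProp p ((r.tail ++ [c]).drop d)} by omega]
        exact hmem
      have h2 := le_csSup hEbdd (show _ ∈ {e : ℕ | PsiProp p ((t ++ [c]).drop e)} from h1)
      omega
    · exact le_csSup hDbdd (by rw [Set.mem_setOf_eq, hshift]; exact hEmem)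
  rw [psi, hkey, hshift]

lemma psi_step {p : ℕ} (hp : 2 ≤ p) {s s' : List α}
    (hl : s.length = 2 * p - 3) (hl' : s'.length = 2 * p - 3)
    (hpsi : psi p s = psi p s') (c : α) :
    psi p (s.tail ++ [c]) = psi p (s'.tail ++ [c]) := by
  have hts : psi p s <:+ s := (psi_spec hp hl.ge).2
  have hts' : psi p s <:+ s' := by rw [hpsi]; exact (psi_spec hp hl'.ge).2
  by_cases hfull : (psi p s).length = s.length
  · have h1 : psi p s = s := hts.eq_of_length hfull
    have h2 : psi p s = s' := hts'.eq_of_length (by rw [hfull, hl, hl'])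
    rw [show s = s' from h1 ▸ h2]
  · have htlen : (psi p s).length < s.length := lt_of_le_of_ne hts.length_le hfull
    have hPt : PsiProp p (psi p s) := (psi_spec hp hl.ge).1
    rw [psi_canon hp c hts htlen hPt, psi_canon hp c hts' (by omega) hPt]

end Core

section Walks
variable {α : Type*}

/-- A walk in the Rauzy graph whose ψ-images of vertices stay in `X`, labeled by `u`. -/
def IsWalkAux (p : ℕ) (X : Set (List α)) (g : ℕ → List α) (u : List α) : Prop :=
  (∀ i, i ≤ u.length → g i ∈ rauzyVertices α p ∧ psi p (g i) ∈ X) ∧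
  (∀ i, i < u.length → ∃ c : α, u[i]? = some c ∧
    g (i + 1) = (g i).tail ++ [c] ∧ SqFree (g i ++ [c]))

lemma walk_formula {p : ℕ} (hp : 2 ≤ p) {X : Set (List α)} {g : ℕ → List α} {u : List α}
    (hw : IsWalkAux p X g u) :
    ∀ i, i ≤ u.length → g i = (g 0 ++ u.take i).drop i := by
  have hg0 : (g 0).length = 2 * p - 3 := ((hw.1 0 (Nat.zero_le _)).1).2
  intro i
  induction i with
  | zero => intro _; rw [List.take_zero, List.append_nil, List.drop_zero]
  | succ i ih =>
    intro hi
    obtain ⟨c, hc, hstep, -⟩ := hw.2 i (by omega)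
    have hrec := ih (by omega)
    have htake : u.take i ++ [c] = u.take (i + 1) := by
      rw [List.take_succ, hc]
      rfl
    have hre : g 0 ++ u.take (i + 1) = (g 0 ++ u.take i) ++ [c] := by
      rw [← htake, List.append_assoc]
    have hlen : i + 1 ≤ (g 0 ++ u.take i).length := by
      simp only [List.length_append, List.length_take]
      omega
    rw [hstep, hrec, List.tail_drop, hre, List.drop_append_of_le_length hlen]

lemma walk_avoids {p : ℕ} (hp : 2 ≤ p) {X : Set (List α)} {g : ℕ → List α} {u : List α}
    (hw : IsWalkAux p X g u) : AvoidsSquaresLt p u := by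
  intro v hv hvp hinf
  have hg0 : (g 0).length = 2 * p - 3 := ((hw.1 0 (Nat.zero_le _)).1).2
  obtain ⟨l₁, l₂, h12⟩ := hinf
  have hvlen : 0 < v.length := List.length_pos_iff.mpr hv
  have hulen : u.length = l₁.length + (v.length + v.length) + l₂.length := by
    rw [← h12]; simp only [List.length_append]
  set j' := l₁.length + 2 * v.length - 1 with hj'
  have hj'lt : j' < u.length := by omega
  obtain ⟨c, hc, -, hsf⟩ := hw.2 j' hj'lt
  have hgj' := walk_formula hp hw j' (by omega)
  have htakec : u.take j' ++ [c] = u.take (j' + 1) := by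
    rw [List.take_succ, hc]; rfl
  have htake2 : u.take (j' + 1) = l₁ ++ (v ++ v) := by
    have hu : u = (l₁ ++ (v ++ v)) ++ l₂ := by rw [← h12]
    have h1 : j' + 1 ≤ (l₁ ++ (v ++ v)).length := by
      simp only [List.length_append]; omega
    have h2 : (l₁ ++ (v ++ v)).length ≤ j' + 1 := by
      simp only [List.length_append]; omega
    rw [hu, List.take_append_of_le_length h1, List.take_of_length_le h2]
  have hwin : g j' ++ [c] = ((g 0 ++ l₁) ++ (v ++ v)).drop j' := by
    have hlen : j' ≤ (g 0 ++ u.take j').length := by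
      simp only [List.length_append, List.length_take]; omega
    rw [hgj', ← List.drop_append_of_le_length hlen]
    congr 1
    rw [List.append_assoc, htakec, htake2, List.append_assoc]
  have hvvsuf : v ++ v <:+ g j' ++ [c] := by
    rw [hwin]
    have hlen2 : j' ≤ (g 0 ++ l₁).length := by
      simp only [List.length_append]; omega
    exact ⟨(g 0 ++ l₁).drop j', (List.drop_append_of_le_length hlen2).symm⟩
  exact hsf v hv hvvsuf.isInfix

end Walks

section Count
variable {α : Type*}

/-- The step condition in `walkCount`. -/
def StepProp (A' : Set (List α × List α × α)) (w : List (Option α)) (i : ℕ)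
    (x u : List α) (a : α) : Prop :=
  (x, u, a) ∈ A' ∧ ∀ b : α, w[w.length - (i + 1)]? = some (some b) → a = b

lemma walkCount_zero (A : Set (List α × List α × α)) (w : List (Option α)) (v : List α) :
    walkCount A w 0 v = 1 := rfl

lemma walkCount_succ (A : Set (List α × List α × α)) (w : List (Option α)) (i : ℕ)
    (v : List α) :
    walkCount A w (i + 1) v =
      ∑ᶠ (u : List α), ∑ᶠ (a : α), ∑ᶠ (_ : StepProp A w i v u a), walkCount A w i u := rfl

lemma arc_unpack {p : ℕ} (hp : 2 ≤ p) {X : Set (List α)} {x u : List α} {a : α}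
    (h : (x, u, a) ∈ inducedArcs (psiArcs p (rauzyArcs α p)) X) :
    ∃ s₁ : List α, SqFree (s₁ ++ [a]) ∧ s₁.length = 2 * p - 3 ∧
      psi p s₁ = x ∧ psi p (s₁.tail ++ [a]) = u ∧ x ∈ X ∧ u ∈ X := by
  obtain ⟨⟨s₂, hs₂, heq⟩, hx, hu⟩ := h
  obtain ⟨a₁, b, u₁, hsf, hlen, heq₂⟩ := hs₂
  subst heq₂
  simp only [Prod.mk.injEq] at heq
  obtain ⟨hx1, hu1, ha1⟩ := heq
  subst ha1
  refine ⟨a₁ :: u₁, by simpa using hsf, by simp; omega, hx1.symm, ?_, hx, hu⟩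
  simpa using hu1.symm

lemma arc_target {p : ℕ} (hp : 2 ≤ p) {X : Set (List α)} {s u : List α} {a : α}
    (hs : s ∈ rauzyVertices α p)
    (h : (psi p s, u, a) ∈ inducedArcs (psiArcs p (rauzyArcs α p)) X) :
    SqFree (s ++ [a]) ∧ u = psi p (s.tail ++ [a]) ∧ u ∈ X := by
  obtain ⟨s₁, hsf₁, hl₁, hpsi₁, hstep₁, hx, hu⟩ := arc_unpack hp h
  obtain ⟨hsq, hslen⟩ := hs
  have hext : SqFree (s ++ [a]) :=
    sqfree_extend_transfer hp hsq hl₁ hslen hpsi₁ hsf₁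
  refine ⟨hext, ?_, hu⟩
  rw [← hstep₁, psi_step hp hl₁ hslen hpsi₁ a]

/-- Words of length `i` compatible with the last `i` letters of `w` that label a walk
starting at `s`. -/
def extSet (p : ℕ) (X : Set (List α)) (w : List (Option α)) (i : ℕ) (s : List α) :
    Set (List α) :=
  {v | v.length = i ∧
    (∀ j, j < i → ∀ b : α, w[w.length - i + j]? = some (some b) → v[j]? = some b) ∧
    ∃ g : ℕ → List α, g 0 = s ∧ IsWalkAux p X g v}

lemma extSet_finite [Finite α] (p : ℕ) (X : Set (List α)) (w : List (Option α)) (i : ℕ)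
    (s : List α) : (extSet p X w i s).Finite :=
  (List.finite_length_eq α i).subset fun _ hv => hv.1

lemma count_le_ncard [Fintype α] {p : ℕ} (hp : 2 ≤ p) (X : Set (List α))
    (w : List (Option α)) :
    ∀ i, i ≤ w.length → ∀ s, s ∈ rauzyVertices α p → psi p s ∈ X →
      walkCount (inducedArcs (psiArcs p (rauzyArcs α p)) X) w i (psi p s) ≤
        (extSet p X w i s).ncard := by
  classical
  intro i
  induction i with
  | zero =>
    intro _ s hs hx
    rw [walkCount_zero]
    have hne : [] ∈ extSet p X w 0 s :=
      ⟨rfl, fun j hj => absurd hj (Nat.not_lt_zero j), fun _ => s, rfl,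
        fun m _ => ⟨hs, hx⟩, fun m hm => absurd hm (by simp)⟩
    exact (Set.ncard_pos (extSet_finite p X w 0 s)).mpr ⟨[], hne⟩
  | succ i IH =>
    intro hi s hs hx
    set A' := inducedArcs (psiArcs p (rauzyArcs α p)) X with hA'
    set F : α → List α := fun a => psi p (s.tail ++ [a]) with hF
    have hslen : s.length = 2 * p - 3 := hs.2
    have hPF : ∀ u a, StepProp A' w i (psi p s) u a →
        SqFree (s ++ [a]) ∧ u = F a ∧ u ∈ X := fun u a hPa =>
      arc_target hp hs hPa.1
    -- rewrite the walk count as a concrete finite sum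
    have hcount : walkCount A' w (i + 1) (psi p s) =
        ∑ a ∈ Finset.univ.filter (fun a => StepProp A' w i (psi p s) (F a) a),
          walkCount A' w i (F a) := by
      rw [walkCount_succ]
      have e1 : ∀ u : List α,
          (∑ᶠ (a : α), ∑ᶠ (_ : StepProp A' w i (psi p s) u a), walkCount A' w i u) =
          ∑ a : α, if StepProp A' w i (psi p s) u a then walkCount A' w i u else 0 := by
        intro u
        rw [← finsum_eq_sum_of_fintype]
        exact finsum_congr fun a => finsum_eq_if
      rw [finsum_congr e1]
      rw [finsum_eq_finset_sum_of_support_subset _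
        (s := Finset.image F Finset.univ) ?side]
      case side =>
        intro u hu
        simp only [Function.mem_support] at hu
        obtain ⟨a, -, ha⟩ := Finset.exists_ne_zero_of_sum_ne_zero hu
        have hPa : StepProp A' w i (psi p s) u a := by
          by_contra hc
          rw [if_neg hc] at ha
          exact ha rfl
        exact Finset.mem_coe.mpr (Finset.mem_image.mpr
          ⟨a, Finset.mem_univ a, ((hPF u a hPa).2.1).symm⟩)
      rw [Finset.sum_comm]
      rw [Finset.sum_filter]
      refine Finset.sum_congr rfl fun a _ => ?_
      refine Finset.sum_eq_single_of_mem (F a)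
        (Finset.mem_image.mpr ⟨a, Finset.mem_univ a, rfl⟩) (fun u _ hne => ?_)
      exact if_neg fun hPa => hne (hPF u a hPa).2.1
    rw [hcount]
    -- each successor vertex is a Rauzy vertex with ψ-image in X
    have hsne : s ≠ [] := by
      intro hnil
      rw [hnil] at hslen
      simp at hslen
      omega
    have hsa : ∀ a, StepProp A' w i (psi p s) (F a) a →
        (s.tail ++ [a]) ∈ rauzyVertices α p ∧ psi p (s.tail ++ [a]) ∈ X := by
      intro a hPa
      obtain ⟨hsf, -, huX⟩ := hPF (F a) a hPa
      constructor
      · constructor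
        · have : s.tail ++ [a] = (s ++ [a]).tail := (List.tail_append_of_ne_nil hsne).symm
          rw [this]
          exact hsf.infix (List.tail_suffix _).isInfix
        · simp only [List.length_append, List.length_tail, List.length_singleton]
          omega
      · exact huX
    -- bound each term by the induction hypothesis and assemble by disjoint union
    have hfin : ∀ a : α, (extSet p X w i (s.tail ++ [a])).Finite :=
      fun a => extSet_finite p X w i _
    set T := Finset.univ.filter (fun a => StepProp A' w i (psi p s) (F a) a) with hT
    set Ca : α → Finset (List α) := fun a => (hfin a).toFinset.image (List.cons a) with hCa
    have hstep2 : ∀ a ∈ T, walkCount A' w i (F a) ≤ (Ca a).card := by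
      intro a haT
      have hPa : StepProp A' w i (psi p s) (F a) a := (Finset.mem_filter.mp haT).2
      obtain ⟨hra, hxa⟩ := hsa a hPa
      calc walkCount A' w i (F a) ≤ (extSet p X w i (s.tail ++ [a])).ncard :=
            IH (by omega) _ hra hxa
        _ = (hfin a).toFinset.card := Set.ncard_eq_toFinset_card _ (hfin a)
        _ = (Ca a).card := (Finset.card_image_of_injective _ List.cons_injective).symm
    have hdisj : ∀ a ∈ T, ∀ a' ∈ T, a ≠ a' → Disjoint (Ca a) (Ca a') := by
      intro a _ a' _ hne
      rw [Finset.disjoint_left]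
      intro x hxa hxa'
      obtain ⟨v1, -, hv1⟩ := Finset.mem_image.mp hxa
      obtain ⟨v2, -, hv2⟩ := Finset.mem_image.mp hxa'
      rw [← hv1] at hv2
      injection hv2 with h1 h2
      exact hne h1.symm
    have hsub : T.biUnion Ca ⊆ (extSet_finite p X w (i + 1) s).toFinset := by
      intro x hxmem
      obtain ⟨a, haT, hxCa⟩ := Finset.mem_biUnion.mp hxmem
      obtain ⟨v', hv'mem, hv'eq⟩ := Finset.mem_image.mp hxCa
      have hv' : v' ∈ extSet p X w i (s.tail ++ [a]) := (hfin a).mem_toFinset.mp hv'mem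
      have hPa : StepProp A' w i (psi p s) (F a) a := (Finset.mem_filter.mp haT).2
      obtain ⟨hlen', hcomp', g', hg'0, hwalk'⟩ := hv'
      rw [Set.Finite.mem_toFinset, ← hv'eq]
      refine ⟨by simp [hlen'], ?_, ?_⟩
      · intro j hj b hb
        match j with
        | 0 =>
          rw [Nat.add_zero] at hb
          have hab : a = b := hPa.2 b hb
          simp [hab]
        | Nat.succ j =>
          have hidx : w.length - (i + 1) + (j + 1) = w.length - i + j := by omega
          rw [hidx] at hb
          rw [List.getElem?_cons_succ]
          exact hcomp' j (by omega) b hb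
      · refine ⟨fun n => Nat.rec s (fun m _ => g' m) n, rfl, ?_, ?_⟩
        · intro m hm
          match m with
          | 0 => exact ⟨hs, hx⟩
          | Nat.succ m =>
            refine hwalk'.1 m ?_
            simp only [List.length_cons] at hm
            omega
        · intro m hm
          match m with
          | 0 =>
            refine ⟨a, by simp, ?_, (hPF (F a) a hPa).1⟩
            show g' 0 = s.tail ++ [a]
            rw [hg'0]
          | Nat.succ m =>
            have hm' : m < v'.length := by
              simp only [List.length_cons] at hm
              omega
            obtain ⟨c, hc, hstep, hsf⟩ := hwalk'.2 m hm'
            exact ⟨c, by rw [List.getElem?_cons_succ]; exact hc, hstep, hsf⟩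
    calc ∑ a ∈ T, walkCount A' w i (F a) ≤ ∑ a ∈ T, (Ca a).card :=
          Finset.sum_le_sum hstep2
      _ = (T.biUnion Ca).card := (Finset.card_biUnion hdisj).symm
      _ ≤ (extSet_finite p X w (i + 1) s).toFinset.card := Finset.card_le_card hsub
      _ = (extSet p X w (i + 1) s).ncard :=
          (Set.ncard_eq_toFinset_card _ (extSet_finite p X w (i + 1) s)).symm

end Count

theorem language_from_psi_rauzy_subgraph
    {α : Type*} [Fintype α] (p : ℕ) (hp : 2 ≤ p)
    (W : Set (List (Option α))) (f : ℕ → ℕ) (hf : ∀ n : ℕ, 0 < n → 0 < f n)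
    (X : Set (List α)) (hX : X ⊆ psi p '' rauzyVertices α p) (hXne : X.Nonempty)
    (h : ∀ v ∈ X, ∀ w ∈ W,
      f w.length ≤ walkCount (inducedArcs (psiArcs p (rauzyArcs α p)) X) w w.length v) :
    ∃ L : Set (List α), [] ∈ L ∧ (∀ u ∈ L, AvoidsSquaresLt p u) ∧
      ∀ u ∈ L, ∀ w ∈ W,
        f w.length ≤ Set.ncard {v : List α | v.length = w.length ∧ CompatFin v w ∧ u ++ v ∈ L} := by
  classical
  refine ⟨{u | ∃ g : ℕ → List α, IsWalkAux p X g u}, ?_, ?_, ?_⟩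
  · -- the empty word
    obtain ⟨v₀, hv₀⟩ := hXne
    obtain ⟨s₀, hs₀, hs₀eq⟩ := hX hv₀
    exact ⟨fun _ => s₀, fun i _ => ⟨hs₀, by rw [hs₀eq]; exact hv₀⟩,
      fun i hi => absurd hi (by simp)⟩
  · -- square avoidance
    rintro u ⟨g, hg⟩
    exact walk_avoids hp hg
  · -- the extension property
    rintro u ⟨g, hwalk⟩ w hwW
    have hend := hwalk.1 u.length le_rfl
    have hcount := h (psi p (g u.length)) hend.2 w hwW
    have hle := count_le_ncard hp X w w.length le_rfl (g u.length) hend.1 hend.2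
    have hsubset : extSet p X w w.length (g u.length) ⊆
        {v : List α | v.length = w.length ∧ CompatFin v w ∧
          u ++ v ∈ {u | ∃ g : ℕ → List α, IsWalkAux p X g u}} := by
      rintro v ⟨hvlen, hvcomp, g'', hg''0, hwalk''⟩
      refine ⟨hvlen, ⟨hvlen.le, ?_⟩, ?_⟩
      · intro i hiv a ha
        refine hvcomp i (by omega) a ?_
        rw [show w.length - w.length + i = i by omega]
        exact ha
      · -- concatenate the two walks
        refine ⟨fun n => if n < u.length then g n else g'' (n - u.length), ?_, ?_⟩
        · intro m hm
          by_cases hmu : m < u.length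
          · simp only [if_pos hmu]
            exact hwalk.1 m hmu.le
          · simp only [if_neg hmu]
            refine hwalk''.1 (m - u.length) ?_
            simp only [List.length_append] at hm
            omega
        · intro m hm
          simp only [List.length_append] at hm
          by_cases hmu : m < u.length
          · obtain ⟨c, hc, hstep, hsf⟩ := hwalk.2 m hmu
            refine ⟨c, ?_, ?_, ?_⟩
            · rw [List.getElem?_append_left hmu]
              exact hc
            · by_cases hmu1 : m + 1 < u.length
              · simp only [if_pos hmu, if_pos hmu1]
                exact hstep
              · have hmeq : m + 1 = u.length := by omega
                simp only [if_pos hmu, if_neg hmu1]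
                rw [show m + 1 - u.length = 0 by omega, hg''0, ← hmeq]
                exact hstep
            · simp only [if_pos hmu]
              exact hsf
          · have hmv : m - u.length < v.length := by omega
            obtain ⟨c, hc, hstep, hsf⟩ := hwalk''.2 (m - u.length) hmv
            refine ⟨c, ?_, ?_, ?_⟩
            · rw [List.getElem?_append_right (by omega)]
              exact hc
            · simp only [if_neg hmu, if_neg (show ¬ m + 1 < u.length by omega)]
              rw [show m + 1 - u.length = (m - u.length) + 1 by omega]
              exact hstep
            · simp only [if_neg hmu]
              exact hsf
    calc f w.length ≤ (extSet p X w w.length (g u.length)).ncard := hcount.trans hle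
      _ ≤ _ := Set.ncard_le_ncard hsubset
          ((List.finite_length_eq α w.length).subset fun v hv => hv.1)
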